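/- Let A ⊆ B ⊆ ℝ² and let u : A → ℝ be a bounded doubly increasing function. Then there exists a doubly increasing function w : B → ℝ such that the restriction of w to A equals u, the closures of the images u(A) and w(B) coincide, and w(x,y) = inf_A u at every point (x,y) ∈ B such that every point (x',y') ∈ A has x' > x or y' > y. -/

import Mathlib

theorem stmt_16 (A B : Set (ℝ × ℝ)) (hAB : A ⊆ B) (hA : A.Nonempty)
    (u : ℝ × ℝ → ℝ)
    (hmono : ∀ p ∈ A, ∀ q ∈ A, p ≤ q → u p ≤ u q)
    (hbdd : BddBelow (u '' A) ∧ BddAbove (u '' A)) :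
    ∃ w : ℝ × ℝ → ℝ,
      (∀ p ∈ A, w p = u p) ∧
      (∀ p ∈ B, ∀ q ∈ B, p ≤ q → w p ≤ w q) ∧
      closure (u '' A) = closure (w '' B) ∧
      (∀ p ∈ B, (∀ q ∈ A, p.1 < q.1 ∨ p.2 < q.2) → w p = sInf (u '' A)) := by
  set m : ℝ := sInf (u '' A) with hm
  set S : ℝ × ℝ → Set ℝ := fun p => insert m (u '' {q ∈ A | q ≤ p}) with hS
  have hAim : (u '' A).Nonempty := hA.image u
  have hmle : m ≤ sSup (u '' A) := csInf_le_csSup hAim hbdd.1 hbdd.2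
  have hSub : ∀ p, S p ⊆ insert m (u '' A) := by
    intro p x hx
    rcases hx with rfl | ⟨q, hq, rfl⟩
    · exact Set.mem_insert _ _
    · exact Set.mem_insert_of_mem _ ⟨q, hq.1, rfl⟩
  have hbdd' : BddAbove (insert m (u '' A)) :=
    (bddAbove_insert).mpr hbdd.2
  have hSbdd : ∀ p, BddAbove (S p) := fun p => hbdd'.mono (hSub p)
  set w : ℝ × ℝ → ℝ := fun p => sSup (S p) with hw
  have hne : ∀ p, (S p).Nonempty := fun p => ⟨m, Set.mem_insert _ _⟩
  have hrestr : ∀ p ∈ A, w p = u p := by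
    intro p hp
    apply le_antisymm
    · apply csSup_le (hne p)
      intro x hx
      rcases hx with rfl | ⟨q, hq, rfl⟩
      · exact csInf_le hbdd.1 ⟨p, hp, rfl⟩
      · exact hmono q hq.1 p hp hq.2
    · exact le_csSup (hSbdd p) (Set.mem_insert_of_mem _ ⟨p, ⟨hp, le_refl p⟩, rfl⟩)
  have hmonoW : ∀ p q : ℝ × ℝ, p ≤ q → w p ≤ w q := by
    intro p q hpq
    apply csSup_le_csSup (hSbdd q) (hne p)
    intro x hx
    rcases hx with rfl | ⟨r, hr, rfl⟩
    · exact Set.mem_insert _ _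
    · exact Set.mem_insert_of_mem _ ⟨r, ⟨hr.1, hr.2.trans hpq⟩, rfl⟩
  refine ⟨w, hrestr, fun p hp q hq hpq => hmonoW p q hpq, ?_, ?_⟩
  · apply le_antisymm
    · apply closure_mono
      rintro x ⟨p, hp, rfl⟩
      exact ⟨p, hAB hp, hrestr p hp⟩
    · rw [← closure_closure (s := u '' A)]
      apply closure_mono
      rintro x ⟨p, hp, rfl⟩
      have h1 : w p ∈ closure (S p) := csSup_mem_closure (hne p) (hSbdd p)
      have h2 : closure (S p) ⊆ closure (u '' A) := by
        apply closure_minimal _ isClosed_closure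
        intro x hx
        rcases hx with rfl | ⟨q, hq, rfl⟩
        · exact csInf_mem_closure hAim hbdd.1
        · exact subset_closure ⟨q, hq.1, rfl⟩
      exact h2 h1
  · intro p hp hlt
    have : S p = {m} := by
      ext x
      simp only [hS, Set.mem_insert_iff, Set.mem_singleton_iff]
      constructor
      · rintro (rfl | ⟨q, hq, rfl⟩)
        · rfl
        · rcases hlt q hq.1 with h | h
          · exact absurd hq.2.1 (not_le.mpr h)
          · exact absurd hq.2.2 (not_le.mpr h)
      · rintro rfl; exact Or.inl rfl
    rw [hw]
    simp [this]
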